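/- Assume β_I(R)<∞ and let β̂ := sup_{y∈ℝ²} β(R,y). Then for all λ_p>0 and c̄>0, P₁(R,c̄,λ_p)·P₂(R,c̄) ≤ exp(−(λ_p c̄/(1+c̄ β̂)) β_I(R)) = P_p(λ_p c̄/(1+c̄ β̂)). -/

import Mathlib

open MeasureTheory ProbabilityTheory Filter Real
open scoped ProbabilityTheory

local notation "E2" => EuclideanSpace ℝ (Fin 2)

private lemma aux_one_sub_exp (t M : ℝ) (ht : 0 ≤ t) (htM : t ≤ M) :
    t / (1 + M) ≤ 1 - Real.exp (-t) := by
  have hM : 0 ≤ M := ht.trans htM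
  have h1t : (0:ℝ) < 1 + t := by linarith
  have h1M : (0:ℝ) < 1 + M := by linarith
  have hexp : Real.exp (-t) ≤ (1 + t)⁻¹ := by
    rw [Real.exp_neg]
    exact inv_anti₀ h1t (by linarith [Real.add_one_le_exp t])
  have h1 : t / (1 + M) ≤ t / (1 + t) := by
    gcongr

  have h2 : t / (1 + t) = 1 - (1 + t)⁻¹ := by
    field_simp
    ring
  linarith

set_option maxHeartbeats 1000000 in
/-- Upper bound on the success probability of a Neyman–Scott clustered network
under Rayleigh fading: `P₁(R,c̄,λ_p)·P₂(R,c̄) ≤ P_p(λ_p c̄ / (1 + c̄ β̂))`. -/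
theorem stmt_3
    (g f : E2 → ℝ) (T R lamp cbar : ℝ)
    (hT : 0 < T) (hR : 0 < R) (hlamp : 0 < lamp) (hcbar : 0 < cbar)
    (hg_pos : ∀ x : E2, x ≠ 0 → 0 < g x)
    (hg_cont : ContinuousOn g {(0 : E2)}ᶜ)
    (hg_mono : ∀ x y : E2, x ≠ 0 → y ≠ 0 → ‖x‖ ≤ ‖y‖ → g y ≤ g x)
    (hg_int : ∀ ε : ℝ, 0 < ε → IntegrableOn g (Metric.ball (0 : E2) ε)ᶜ)
    (hf_meas : Measurable f) (hf_nonneg : ∀ x, 0 ≤ f x)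
    (hf_prob : ∫ x, f x = 1)
    (hf_iso : ∀ x y : E2, ‖x‖ = ‖y‖ → f x = f y)
    (z : E2) (hz : z = EuclideanSpace.single (0 : Fin 2) R)
    (β : E2 → ℝ)
    (hβ : ∀ y, β y = ∫ x, g (x - y - z) / (g z / T + g (x - y - z)) * f x)
    (βI : ℝ) (hβI : βI = ∫ u, g u / (g z / T + g u))
    (hβI_fin : Integrable fun u : E2 => g u / (g z / T + g u))
    (βhat : ℝ) (hβhat : βhat = ⨆ y : E2, β y)
    (P1 P2 : ℝ)
    (hP1 : P1 = Real.exp (-(lamp * ∫ y, (1 - Real.exp (-(cbar * β y))))))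
    (hP2 : P2 = ∫ y, Real.exp (-(cbar * β y)) * f y) :
    P1 * P2 ≤ Real.exp (-(lamp * cbar / (1 + cbar * βhat) * βI)) := by
  classical
  -- z ≠ 0
  have hz0 : z ≠ 0 := by
    rw [hz]
    intro h
    have h0 := congrArg (fun v => v 0) h
    simp [EuclideanSpace.single_apply] at h0
    exact hR.ne' h0
  have hgz : 0 < g z := hg_pos z hz0
  have hd : 0 < g z / T := div_pos hgz hT
  -- the modified kernel h'
  set h' : E2 → ℝ := fun u => if u = 0 then 0 else g u / (g z / T + g u) with hh'def
  have hg_meas : Measurable g := measurable_of_continuousOn_compl_singleton 0 hg_cont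
  have hh'_meas : Measurable h' := by
    refine Measurable.ite (measurableSet_eq) measurable_const ?_
    exact hg_meas.div (measurable_const.add hg_meas)
  have hh'_nonneg : ∀ u, 0 ≤ h' u := by
    intro u
    simp only [hh'def]
    split_ifs with hu
    · exact le_rfl
    · exact (div_nonneg (hg_pos u hu).le (by linarith [hg_pos u hu]))
  have hh'_le_one : ∀ u, h' u ≤ 1 := by
    intro u
    simp only [hh'def]
    split_ifs with hu
    · norm_num
    · have hgu := hg_pos u hu
      rw [div_le_one (by linarith)]
      linarith
  -- a.e. equalities
  have hne : ∀ᵐ u : E2, u ≠ (0 : E2) := by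
    rw [ae_iff]
    simpa using (measure_singleton (0 : E2) : (volume : Measure E2) {0} = 0)
  have hβI' : βI = ∫ u, h' u := by
    rw [hβI]
    refine integral_congr_ae ?_
    filter_upwards [hne] with u hu
    simp [hh'def, hu]
  have hh'_int : Integrable h' := by
    refine hβI_fin.congr ?_
    filter_upwards [hne] with u hu
    simp [hh'def, hu]
  have hβ' : ∀ y, β y = ∫ x, h' (x - y - z) * f x := by
    intro y
    rw [hβ y]
    refine integral_congr_ae ?_
    have hae : ∀ᵐ x : E2, x ≠ y + z := by
      rw [ae_iff]
      simpa using (measure_singleton (y + z) : (volume : Measure E2) {y + z} = 0)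
    filter_upwards [hae] with x hx
    have hx0 : x - y - z ≠ 0 := by
      rw [sub_sub, sub_ne_zero]
      exact hx
    simp [hh'def, hx0]
  -- f is integrable
  have hf_int : Integrable f := by
    by_contra hc
    rw [integral_undef hc] at hf_prob
    exact one_ne_zero hf_prob.symm
  -- per-y integrability and bounds for β
  have hFy_meas : ∀ y : E2, Measurable fun x : E2 => h' (x - y - z) * f x := fun y =>
    (hh'_meas.comp ((measurable_id.sub measurable_const).sub measurable_const)).mul hf_meas
  have hFy_bound : ∀ (y x : E2), h' (x - y - z) * f x ≤ f x := by
    intro y x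
    calc h' (x - y - z) * f x ≤ 1 * f x :=
          mul_le_mul_of_nonneg_right (hh'_le_one _) (hf_nonneg x)
      _ = f x := one_mul _
  have hFy_int : ∀ y, Integrable (fun x : E2 => h' (x - y - z) * f x) := by
    intro y
    refine hf_int.mono' (hFy_meas y).aestronglyMeasurable ?_
    filter_upwards with x
    rw [Real.norm_eq_abs, abs_of_nonneg (mul_nonneg (hh'_nonneg _) (hf_nonneg x))]
    exact hFy_bound y x
  have hβ_nonneg : ∀ y, 0 ≤ β y := by
    intro y
    rw [hβ' y]
    exact integral_nonneg fun x => mul_nonneg (hh'_nonneg _) (hf_nonneg x)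
  have hβ_le_one : ∀ y, β y ≤ 1 := by
    intro y
    rw [hβ' y, ← hf_prob]
    exact integral_mono (hFy_int y) hf_int (hFy_bound y)
  -- βhat
  have hbdd : BddAbove (Set.range β) := ⟨1, by rintro _ ⟨y, rfl⟩; exact hβ_le_one y⟩
  have hβ_le_hat : ∀ y, β y ≤ βhat := by
    intro y
    rw [hβhat]
    exact le_ciSup hbdd y
  have hβhat_nonneg : 0 ≤ βhat := (hβ_nonneg 0).trans (hβ_le_hat 0)
  have hden1 : (0:ℝ) < 1 + cbar * βhat := by nlinarith
  -- product function
  set F : E2 × E2 → ℝ := fun p => h' (p.2 - p.1 - z) * f p.2 with hFdef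
  have hF_meas : Measurable F :=
    (hh'_meas.comp ((measurable_snd.sub measurable_fst).sub measurable_const)).mul
      (hf_meas.comp measurable_snd)
  have hF_nonneg : ∀ p, 0 ≤ F p := fun p => mul_nonneg (hh'_nonneg _) (hf_nonneg _)
  -- lintegral facts
  have hlint_h : ∫⁻ u, ENNReal.ofReal (h' u) = ENNReal.ofReal βI := by
    rw [hβI']
    exact (ofReal_integral_eq_lintegral_ofReal hh'_int
      (Filter.Eventually.of_forall hh'_nonneg)).symm
  have hlint_f : ∫⁻ x, ENNReal.ofReal (f x) = 1 := by
    rw [← ofReal_integral_eq_lintegral_ofReal hf_int (Filter.Eventually.of_forall hf_nonneg),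
      hf_prob, ENNReal.ofReal_one]
  -- the inner translated lintegral
  have hinner : ∀ x : E2, ∫⁻ y, ENNReal.ofReal (F (y, x)) = ENNReal.ofReal βI * ENNReal.ofReal (f x) := by
    intro x
    have hFyx : ∀ y : E2, F (y, x) = h' ((x - z) - y) * f x := by
      intro y
      simp only [hFdef]
      rw [sub_right_comm]
    calc ∫⁻ y, ENNReal.ofReal (F (y, x))
        = ∫⁻ y, ENNReal.ofReal (h' ((x - z) - y)) * ENNReal.ofReal (f x) := by
          simp_rw [hFyx, ENNReal.ofReal_mul (hh'_nonneg _)]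
      _ = (∫⁻ y, ENNReal.ofReal (h' ((x - z) - y))) * ENNReal.ofReal (f x) :=
          lintegral_mul_const _ ((hh'_meas.comp (measurable_const.sub measurable_id)).ennreal_ofReal)
      _ = ENNReal.ofReal βI * ENNReal.ofReal (f x) := by
          rw [(Measure.measurePreserving_sub_left (volume : Measure E2) (x - z)).lintegral_comp
            hh'_meas.ennreal_ofReal, hlint_h]
  -- integrability of F on the product
  have hF_int : Integrable F ((volume : Measure E2).prod volume) := by
    refine ⟨hF_meas.aestronglyMeasurable, ?_⟩
    rw [hasFiniteIntegral_iff_ofReal (Filter.Eventually.of_forall hF_nonneg)]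
    have hcalc : ∫⁻ p, ENNReal.ofReal (F p) ∂((volume : Measure E2).prod volume)
        = ENNReal.ofReal βI := by
      calc ∫⁻ p, ENNReal.ofReal (F p) ∂((volume : Measure E2).prod volume)
          = ∫⁻ y, ∫⁻ x, ENNReal.ofReal (F (y, x)) :=
            lintegral_prod _ hF_meas.ennreal_ofReal.aemeasurable
        _ = ∫⁻ x, ∫⁻ y, ENNReal.ofReal (F (y, x)) :=
            (lintegral_lintegral_swap (f := fun y x => ENNReal.ofReal (F (y, x)))
              hF_meas.ennreal_ofReal.aemeasurable)
        _ = ∫⁻ x, ENNReal.ofReal βI * ENNReal.ofReal (f x) := by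
            exact lintegral_congr hinner
        _ = ENNReal.ofReal βI * ∫⁻ x, ENNReal.ofReal (f x) :=
            lintegral_const_mul _ hf_meas.ennreal_ofReal
        _ = ENNReal.ofReal βI := by rw [hlint_f, mul_one]
    rw [hcalc]
    exact ENNReal.ofReal_lt_top
  -- Integrability of β
  have hβ_eq_int : ∀ y, (∫ x, F (y, x)) = β y := by
    intro y
    rw [hβ' y]
  have hβ_int : Integrable β :=
    hF_int.integral_prod_left.congr (Filter.Eventually.of_forall hβ_eq_int)
  -- ∫ β = βI
  have hint_swap : ∫ y, β y = βI := by
    calc ∫ y, β y = ∫ y, ∫ x, F (y, x) := by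
          refine integral_congr_ae (Filter.Eventually.of_forall fun y => ?_)
          exact (hβ_eq_int y).symm
      _ = ∫ x, ∫ y, F (y, x) :=
          integral_integral_swap (f := fun y x => F (y, x)) hF_int
      _ = ∫ x, βI * f x := by
          refine integral_congr_ae (Filter.Eventually.of_forall fun x => ?_)
          have hFyx : ∀ y : E2, F (y, x) = h' ((x - z) - y) * f x := by
            intro y
            simp only [hFdef]
            rw [sub_right_comm]
          calc ∫ y, F (y, x) = ∫ y, h' ((x - z) - y) * f x := by simp_rw [hFyx]
            _ = (∫ y, h' ((x - z) - y)) * f x := integral_mul_const _ _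
            _ = βI * f x := by
                rw [integral_sub_left_eq_self h' volume (x - z), ← hβI']
      _ = βI := by rw [integral_const_mul, hf_prob, mul_one]
  have hβI_nonneg : 0 ≤ βI := by
    rw [← hint_swap]
    exact integral_nonneg hβ_nonneg
  -- the exponential lower bound
  set c : ℝ := cbar / (1 + cbar * βhat) with hc
  have hc_pos : 0 < c := div_pos hcbar hden1
  have hGle : ∀ y, c * β y ≤ 1 - Real.exp (-(cbar * β y)) := by
    intro y
    have h := aux_one_sub_exp (cbar * β y) (cbar * βhat)
      (mul_nonneg hcbar.le (hβ_nonneg y))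
      (mul_le_mul_of_nonneg_left (hβ_le_hat y) hcbar.le)
    calc c * β y = cbar * β y / (1 + cbar * βhat) := by rw [hc]; ring
      _ ≤ _ := h
  have hG_meas : AEStronglyMeasurable (fun y => 1 - Real.exp (-(cbar * β y))) volume := by
    have hcont : Continuous fun t : ℝ => 1 - Real.exp (-(cbar * t)) :=
      continuous_const.sub (Real.continuous_exp.comp (continuous_const.mul continuous_id).neg)
    exact hcont.comp_aestronglyMeasurable hβ_int.1
  have hG_int : Integrable (fun y => 1 - Real.exp (-(cbar * β y))) := by
    refine (hβ_int.const_mul cbar).mono' hG_meas ?_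
    filter_upwards with y
    have h0 : 0 ≤ cbar * β y := mul_nonneg hcbar.le (hβ_nonneg y)
    have h1 : Real.exp (-(cbar * β y)) ≤ 1 := by
      calc Real.exp (-(cbar * β y)) ≤ Real.exp 0 := Real.exp_le_exp.mpr (by linarith)
        _ = 1 := Real.exp_zero
    rw [Real.norm_eq_abs, abs_of_nonneg (by linarith : (0:ℝ) ≤ 1 - Real.exp (-(cbar * β y)))]
    nlinarith [Real.add_one_le_exp (-(cbar * β y))]
  have hintG : c * βI ≤ ∫ y, (1 - Real.exp (-(cbar * β y))) := by
    calc c * βI = ∫ y, c * β y := by rw [← hint_swap, ← integral_const_mul]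
      _ ≤ _ := integral_mono (hβ_int.const_mul c) hG_int hGle
  -- P2 bounds
  have hP2_nonneg : 0 ≤ P2 := by
    rw [hP2]
    exact integral_nonneg fun y => mul_nonneg (Real.exp_pos _).le (hf_nonneg y)
  have hP2_le_one : P2 ≤ 1 := by
    rw [hP2, ← hf_prob]
    have hint2 : Integrable (fun y => Real.exp (-(cbar * β y)) * f y) := by
      have hmeas2 : AEStronglyMeasurable (fun y => Real.exp (-(cbar * β y)) * f y) volume := by
        have hcont : Continuous fun t : ℝ => Real.exp (-(cbar * t)) :=
          Real.continuous_exp.comp (continuous_const.mul continuous_id).neg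
        exact (hcont.comp_aestronglyMeasurable hβ_int.1).mul hf_meas.aestronglyMeasurable
      refine hf_int.mono' hmeas2 ?_
      filter_upwards with y
      have h1 : Real.exp (-(cbar * β y)) ≤ 1 := by
        calc Real.exp (-(cbar * β y)) ≤ Real.exp 0 :=
              Real.exp_le_exp.mpr (by nlinarith [hβ_nonneg y])
          _ = 1 := Real.exp_zero
      rw [Real.norm_eq_abs, abs_of_nonneg (mul_nonneg (Real.exp_pos _).le (hf_nonneg y))]
      calc Real.exp (-(cbar * β y)) * f y ≤ 1 * f y :=
            mul_le_mul_of_nonneg_right h1 (hf_nonneg y)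
        _ = f y := one_mul _
    refine integral_mono hint2 hf_int fun y => ?_
    have h1 : Real.exp (-(cbar * β y)) ≤ 1 := by
      calc Real.exp (-(cbar * β y)) ≤ Real.exp 0 :=
            Real.exp_le_exp.mpr (by nlinarith [hβ_nonneg y])
        _ = 1 := Real.exp_zero
    calc Real.exp (-(cbar * β y)) * f y ≤ 1 * f y :=
          mul_le_mul_of_nonneg_right h1 (hf_nonneg y)
      _ = f y := one_mul _
  -- P1 bound
  have hP1_nonneg : 0 ≤ P1 := by rw [hP1]; exact (Real.exp_pos _).le
  have hP1_le : P1 ≤ Real.exp (-(lamp * (c * βI))) := by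
    rw [hP1]
    apply Real.exp_le_exp.mpr
    have := mul_le_mul_of_nonneg_left hintG hlamp.le
    linarith
  calc P1 * P2 ≤ P1 * 1 := mul_le_mul_of_nonneg_left hP2_le_one hP1_nonneg
    _ = P1 := mul_one _
    _ ≤ Real.exp (-(lamp * (c * βI))) := hP1_le
    _ = Real.exp (-(lamp * cbar / (1 + cbar * βhat) * βI)) := by
        congr 1
        rw [hc]
        ring
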